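/- For −n ≤ p < 0 in ℝⁿ with density r^p (n ≥ 2), for every V > 0 and every ε > 0 there exists a Euclidean sphere S not containing the origin whose weighted enclosed volume equals V and whose weighted surface area is less than ε. In particular: for a Euclidean ball of radius R > 1 centered at distance r_min + R from the origin with r_min > R^q where q = −n/p ≥ 1, the weighted volume exceeds c₀ Rⁿ r_max^p and the weighted surface area is less than c₂ R^{n−1} r_min^p < c₂ R^{−1}, for dimensional constants c₀, c₂ > 0. -/

import Mathlib

open Real MeasureTheory Metric Set
open scoped NNReal ENNReal Pointwise

variable {n : ℕ}

-- Lipschitz constant-1 of insertNth with fixed value, sup metric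
lemma lipschitz_insertNth (m : ℕ) (i : Fin (m+1)) (σ : ℝ) :
    LipschitzWith 1 (fun y : Fin m → ℝ => i.insertNth (α := fun _ => ℝ) σ y) := by
  apply LipschitzWith.of_dist_le_mul
  intro y z
  rw [NNReal.coe_one, one_mul]
  rw [dist_pi_le_iff dist_nonneg]
  intro j
  rcases eq_or_ne j i with rfl | hj
  · rw [Fin.insertNth_apply_same, Fin.insertNth_apply_same, dist_self]
    exact dist_nonneg
  · obtain ⟨j', rfl⟩ := Fin.exists_succAbove_eq hj
    rw [Fin.insertNth_apply_succAbove, Fin.insertNth_apply_succAbove]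
    exact dist_le_pi_dist y z j'

lemma radial_lipschitzOnWith {E : Type*} [NormedAddCommGroup E] [NormedSpace ℝ E] :
    LipschitzOnWith 2 (fun z : E => ‖z‖⁻¹ • z) {z : E | 1 ≤ ‖z‖} := by
  rw [lipschitzOnWith_iff_dist_le_mul]
  intro a ha b hb
  simp only [Set.mem_setOf_eq] at ha hb
  have ha0 : (0:ℝ) < ‖a‖ := lt_of_lt_of_le one_pos ha
  have hb0 : (0:ℝ) < ‖b‖ := lt_of_lt_of_le one_pos hb
  rw [dist_eq_norm, dist_eq_norm]
  have key : ‖a‖⁻¹ • a - ‖b‖⁻¹ • b = ‖a‖⁻¹ • (a - b) + (‖a‖⁻¹ - ‖b‖⁻¹) • b := by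
    rw [smul_sub, sub_smul]; abel
  rw [key]
  have h1 : ‖‖a‖⁻¹ • (a - b)‖ ≤ ‖a - b‖ := by
    rw [norm_smul, norm_inv, norm_norm]
    calc ‖a‖⁻¹ * ‖a - b‖ ≤ 1 * ‖a - b‖ := by
          gcongr
          exact inv_le_one_of_one_le₀ ha
      _ = ‖a - b‖ := one_mul _
  have h2 : ‖(‖a‖⁻¹ - ‖b‖⁻¹) • b‖ ≤ ‖a - b‖ := by
    rw [norm_smul, norm_sub_rev]
    rw [inv_sub_inv hb0.ne' ha0.ne']
    rw [Real.norm_eq_abs, abs_div, abs_mul, abs_of_pos ha0, abs_of_pos hb0, mul_comm ‖b‖ ‖a‖]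
    rw [div_mul_eq_mul_div, mul_comm]
    rw [div_le_iff₀ (by positivity)]
    calc ‖b‖ * |‖a‖ - ‖b‖| ≤ ‖b‖ * ‖a - b‖ := by
          gcongr
          exact abs_norm_sub_norm_le a b
      _ ≤ ‖a - b‖ * (‖a‖ * ‖b‖) := by
          rw [mul_comm]
          gcongr
          nlinarith [hb0.le]
  calc ‖‖a‖⁻¹ • (a - b) + (‖a‖⁻¹ - ‖b‖⁻¹) • b‖
      ≤ ‖‖a‖⁻¹ • (a - b)‖ + ‖(‖a‖⁻¹ - ‖b‖⁻¹) • b‖ := norm_add_le _ _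
    _ ≤ ‖a - b‖ + ‖a - b‖ := add_le_add h1 h2
    _ = 2 * ‖a - b‖ := by ring

lemma cube_sphere_cover (m : ℕ) :
    sphere (0 : Fin (m+1) → ℝ) 1 ⊆
      ⋃ q : Fin (m+1) × Bool,
        (fun y : Fin m → ℝ => q.1.insertNth (α := fun _ => ℝ) (if q.2 then 1 else -1) y) ''
          (closedBall 0 1) := by
  intro x hx
  have hx1 : ‖x‖ = 1 := by simpa using hx
  -- find coordinate where sup is attained
  have hne : (Finset.univ : Finset (Fin (m+1))).Nonempty := Finset.univ_nonempty
  obtain ⟨i, -, hi⟩ := Finset.exists_mem_eq_sup Finset.univ hne (fun i => ‖x i‖₊)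
  have hnn : ‖x‖₊ = ‖x i‖₊ := by rw [Pi.nnnorm_def, hi]
  have hnorm : ‖x i‖ = 1 := by
    have : (‖x‖₊ : ℝ) = (‖x i‖₊ : ℝ) := congrArg NNReal.toReal hnn
    simp only [coe_nnnorm] at this
    rw [← this, hx1]
  have habs : x i = 1 ∨ x i = -1 :=
    (abs_eq zero_le_one).mp (by rwa [Real.norm_eq_abs] at hnorm)
  rw [Set.mem_iUnion]
  refine ⟨(i, if x i = 1 then true else false), ?_⟩
  refine ⟨Fin.removeNth i x, ?_, ?_⟩
  · rw [mem_closedBall, dist_pi_le_iff zero_le_one]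
    intro j
    calc dist (Fin.removeNth i x j) 0 = ‖x (i.succAbove j)‖ := by
          simp [Fin.removeNth, Real.dist_eq]
      _ ≤ ‖x‖ := norm_le_pi_norm x _
      _ = 1 := hx1
  · rcases habs with h | h
    · simp only [h, if_pos rfl, if_pos]
      rw [← h]
      exact Fin.insertNth_self_removeNth i x
    · have hne1 : x i ≠ 1 := by rw [h]; norm_num
      simp only [if_neg hne1, if_neg Bool.false_ne_true]
      rw [show (-1 : ℝ) = x i from h.symm]
      exact Fin.insertNth_self_removeNth i x

lemma sphere_pi_hausdorff_ne_top (m : ℕ) :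
    μH[(m : ℝ)] (sphere (0 : Fin (m+1) → ℝ) 1) ≠ ⊤ := by
  have hcover := cube_sphere_cover m
  have hle := measure_mono (μ := μH[(m : ℝ)]) hcover
  refine ne_top_of_le_ne_top ?_ hle
  have hUle := measure_iUnion_le (μ := μH[(m : ℝ)])
    (s := fun q : Fin (m+1) × Bool =>
      (fun y : Fin m → ℝ => q.1.insertNth (α := fun _ => ℝ) (if q.2 then 1 else -1) y) ''
        (closedBall 0 1))
  refine ne_top_of_le_ne_top ?_ hUle
  rw [tsum_fintype]
  refine (ENNReal.sum_lt_top.mpr ?_).ne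
  intro q _
  have him := (lipschitz_insertNth m q.1 (if q.2 then 1 else -1)).hausdorffMeasure_image_le
    (by positivity : (0:ℝ) ≤ (m:ℝ)) (closedBall 0 1)
  refine lt_of_le_of_lt him ?_
  have hpi : (μH[(m : ℝ)] : Measure (Fin m → ℝ)) = volume := by
    have := MeasureTheory.hausdorffMeasure_pi_real (ι := Fin m)
    simpa [Fintype.card_fin] using this
  rw [hpi]
  have hvol : volume (closedBall (0 : Fin m → ℝ) 1) < ⊤ :=
    (isCompact_closedBall _ _).measure_lt_top
  calc (1 : ℝ≥0) ^ (m:ℝ) * volume (closedBall (0 : Fin m → ℝ) 1)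
      = volume (closedBall (0 : Fin m → ℝ) 1) := by simp
    _ < ⊤ := hvol

lemma sphere_E_hausdorff_ne_top (m : ℕ) :
    μH[(m : ℝ)] (sphere (0 : EuclideanSpace ℝ (Fin (m+1))) 1) ≠ ⊤ := by
  set φ : (Fin (m+1) → ℝ) → EuclideanSpace ℝ (Fin (m+1)) :=
    ⇑(WithLp.equiv 2 (Fin (m+1) → ℝ)).symm with hφdef
  set K₀ : ℝ≥0 := (Fintype.card (Fin (m+1)) : ℝ≥0) ^ ((1 : ℝ≥0∞)/2).toReal with hK₀
  have hφ : LipschitzWith K₀ φ := by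
    have ha := PiLp.antilipschitzWith_ofLp 2 (fun _ : Fin (m+1) => ℝ)
    exact ha.to_rightInverse (fun x => (WithLp.equiv 2 (Fin (m+1) → ℝ)).apply_symm_apply x)
  have hnormφ : ∀ x : Fin (m+1) → ℝ, ‖x‖ ≤ ‖φ x‖ := by
    intro x
    have h := (PiLp.lipschitzWith_ofLp 2 (fun _ : Fin (m+1) => ℝ)).dist_le_mul (φ x) 0
    simpa [hφdef, dist_eq_norm] using h
  have hmaps : Set.MapsTo φ (sphere (0 : Fin (m+1) → ℝ) 1)
      {z : EuclideanSpace ℝ (Fin (m+1)) | 1 ≤ ‖z‖} := by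
    intro x hx
    have hx1 : ‖x‖ = 1 := by simpa using hx
    exact le_trans (le_of_eq hx1.symm) (hnormφ x)
  have hF : LipschitzOnWith (2 * K₀)
      ((fun z : EuclideanSpace ℝ (Fin (m+1)) => ‖z‖⁻¹ • z) ∘ φ)
      (sphere (0 : Fin (m+1) → ℝ) 1) :=
    radial_lipschitzOnWith.comp hφ.lipschitzOnWith hmaps
  have hsub : sphere (0 : EuclideanSpace ℝ (Fin (m+1))) 1 ⊆
      ((fun z : EuclideanSpace ℝ (Fin (m+1)) => ‖z‖⁻¹ • z) ∘ φ) ''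
        (sphere (0 : Fin (m+1) → ℝ) 1) := by
    intro y hy
    have hy1 : ‖y‖ = 1 := by simpa using hy
    set u : Fin (m+1) → ℝ := WithLp.equiv 2 (Fin (m+1) → ℝ) y with hu
    have hu0 : u ≠ 0 := by
      intro h
      apply one_ne_zero (α := ℝ)
      rw [← hy1]
      have : y = 0 := by
        have := congrArg (WithLp.equiv 2 (Fin (m+1) → ℝ)).symm h
        simpa [hu] using this
      simp [this]
    have hun : (0:ℝ) < ‖u‖ := norm_pos_iff.mpr hu0
    refine ⟨‖u‖⁻¹ • u, ?_, ?_⟩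
    · simp [norm_smul, abs_of_pos (inv_pos.mpr hun), inv_mul_cancel₀ hun.ne']
    · have hφu : φ (‖u‖⁻¹ • u) = ‖u‖⁻¹ • y := by
        simp [hφdef, hu]
      simp only [Function.comp_apply, hφu]
      rw [norm_smul, hy1, Real.norm_eq_abs, abs_of_pos (inv_pos.mpr hun), mul_one,
        inv_inv, smul_smul, mul_inv_cancel₀ hun.ne', one_smul]
  have h1 := measure_mono (μ := μH[(m:ℝ)]) hsub
  refine ne_top_of_le_ne_top ?_ h1
  have h2 := hF.hausdorffMeasure_image_le (by positivity : (0:ℝ) ≤ (m:ℝ))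
  refine ne_top_of_le_ne_top ?_ h2
  exact ENNReal.mul_ne_top (ENNReal.rpow_ne_top_of_nonneg (by positivity) ENNReal.coe_ne_top)
    (sphere_pi_hausdorff_ne_top m)

section Integrals

variable {N : ℕ} {p : ℝ}

lemma norm_lower_of_closedBall {c x : EuclideanSpace ℝ (Fin N)} {r : ℝ}
    (hx : x ∈ closedBall c r) : ‖c‖ - r ≤ ‖x‖ := by
  have h1 : dist x c ≤ r := mem_closedBall.mp hx
  have h2 : ‖c‖ - ‖x‖ ≤ ‖c - x‖ := norm_sub_norm_le c x
  rw [← dist_eq_norm, dist_comm] at h2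
  linarith

lemma integrableOn_rpow_ball (c : EuclideanSpace ℝ (Fin N)) {r : ℝ} (hcr : r < ‖c‖) :
    IntegrableOn (fun x : EuclideanSpace ℝ (Fin N) => ‖x‖ ^ p) (ball c r) := by
  have hcont : ContinuousOn (fun x : EuclideanSpace ℝ (Fin N) => ‖x‖ ^ p) (closedBall c r) := by
    apply ContinuousOn.rpow_const continuous_norm.continuousOn
    intro x hx
    left
    have := norm_lower_of_closedBall hx
    have h0 : (0:ℝ) < ‖x‖ := by linarith [norm_lower_of_closedBall hx]
    exact h0.ne'
  exact (hcont.integrableOn_compact (isCompact_closedBall c r)).mono_set ball_subset_closedBall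

lemma setIntegral_rpow_ball_lower (hp : p ≤ 0) (c : EuclideanSpace ℝ (Fin N)) {r : ℝ}
    (hr : 0 < r) (hcr : r < ‖c‖) :
    (‖c‖ + r) ^ p * (volume (ball c r)).toReal ≤ ∫ x in ball c r, ‖x‖ ^ p := by
  have h0c : (0:ℝ) < ‖c‖ + r := by positivity
  have hint := integrableOn_rpow_ball (p := p) c hcr
  have hconst : IntegrableOn (fun _ : EuclideanSpace ℝ (Fin N) => (‖c‖ + r) ^ p) (ball c r) := by
    exact integrableOn_const measure_ball_lt_top.ne
  have hmono := setIntegral_mono_on hconst hint measurableSet_ball (fun x hx => by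
    have hxu : ‖x‖ ≤ ‖c‖ + r := by
      have h1 : dist x c ≤ r := (mem_closedBall.mp (ball_subset_closedBall hx))
      have h2 : ‖x‖ - ‖c‖ ≤ ‖x - c‖ := norm_sub_norm_le x c
      rw [← dist_eq_norm] at h2
      linarith
    have hx0 : (0:ℝ) < ‖x‖ := by linarith [norm_lower_of_closedBall (ball_subset_closedBall hx)]
    exact Real.rpow_le_rpow_of_nonpos hx0 hxu hp)
  calc (‖c‖ + r) ^ p * (volume (ball c r)).toReal
      = ∫ _x in ball c r, (‖c‖ + r) ^ p := by rw [setIntegral_const, smul_eq_mul, mul_comm]; rfl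
    _ ≤ ∫ x in ball c r, ‖x‖ ^ p := hmono

lemma setIntegral_rpow_ball_upper (hp : p ≤ 0) (c : EuclideanSpace ℝ (Fin N)) {r : ℝ}
    (hr : 0 < r) (hcr : r < ‖c‖) :
    (∫ x in ball c r, ‖x‖ ^ p) ≤ (‖c‖ - r) ^ p * (volume (ball c r)).toReal := by
  have h0c : (0:ℝ) < ‖c‖ - r := by linarith
  have hint := integrableOn_rpow_ball (p := p) c hcr
  have hconst : IntegrableOn (fun _ : EuclideanSpace ℝ (Fin N) => (‖c‖ - r) ^ p) (ball c r) := by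
    exact integrableOn_const measure_ball_lt_top.ne
  have hmono := setIntegral_mono_on hint hconst measurableSet_ball (fun x hx => by
    have hxl : ‖c‖ - r ≤ ‖x‖ := norm_lower_of_closedBall (ball_subset_closedBall hx)
    exact Real.rpow_le_rpow_of_nonpos h0c hxl hp)
  calc (∫ x in ball c r, ‖x‖ ^ p) ≤ ∫ _x in ball c r, (‖c‖ - r) ^ p := hmono
    _ = (‖c‖ - r) ^ p * (volume (ball c r)).toReal := by
        rw [setIntegral_const, smul_eq_mul, mul_comm]; rfl

lemma setIntegral_ball_translate (c : EuclideanSpace ℝ (Fin N)) (r : ℝ)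
    (f : EuclideanSpace ℝ (Fin N) → ℝ) :
    ∫ x in ball c r, f x = ∫ x in ball (0 : EuclideanSpace ℝ (Fin N)) r, f (x + c) := by
  have hmp : MeasurePreserving (fun x : EuclideanSpace ℝ (Fin N) => x + c) volume volume :=
    measurePreserving_add_right volume c
  have hemb : MeasurableEmbedding (fun x : EuclideanSpace ℝ (Fin N) => x + c) :=
    (MeasurableEquiv.addRight c).measurableEmbedding
  have := hmp.setIntegral_preimage_emb hemb f (ball c r)
  rw [← this]
  congr 1
  ext x
  simp [mem_ball, dist_eq_norm]

lemma continuousOn_G (hp₂ : p < 0) {e : EuclideanSpace ℝ (Fin N)} (he : ‖e‖ = 1) {ρ : ℝ} (hρ : 0 < ρ) :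
    ∀ D₀ ∈ Set.Ioi ρ, ContinuousAt
      (fun D : ℝ => ∫ x in ball (0 : EuclideanSpace ℝ (Fin N)) ρ, ‖x + D • e‖ ^ p) D₀ := by
  intro D₀ hD₀
  rw [Set.mem_Ioi] at hD₀
  have hδ : (0:ℝ) < (D₀ - ρ)/2 := by linarith
  have hmem : Set.Ioi ((D₀ + ρ)/2) ∈ nhds D₀ := Ioi_mem_nhds (by linarith)
  have hlow : ∀ D ∈ Set.Ioi ((D₀ + ρ)/2), ∀ x ∈ ball (0 : EuclideanSpace ℝ (Fin N)) ρ,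
      (D₀ - ρ)/2 ≤ ‖x + D • e‖ := by
    intro D hD x hx
    rw [Set.mem_Ioi] at hD
    have hxn : ‖x‖ < ρ := by simpa [dist_eq_norm] using mem_ball.mp hx
    have h1 : ‖D • e‖ - ‖x‖ ≤ ‖x + D • e‖ := by
      have := norm_sub_norm_le (D • e) (-x)
      simpa [add_comm, norm_neg, sub_neg_eq_add] using this
    have h2 : ‖D • e‖ = |D| := by rw [norm_smul, he, mul_one, Real.norm_eq_abs]
    have hDpos : 0 < D := by linarith
    rw [h2, abs_of_pos hDpos] at h1
    linarith
  apply MeasureTheory.continuousAt_of_dominated (bound := fun _ => ((D₀ - ρ)/2) ^ p)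
  · filter_upwards with D
    apply AEStronglyMeasurable.restrict
    exact ((measurable_norm.comp (measurable_id.add_const (D • e))).pow_const p).aestronglyMeasurable
  · filter_upwards [hmem] with D hD
    rw [ae_restrict_iff' measurableSet_ball]
    filter_upwards with x hx
    have := hlow D hD x hx
    rw [Real.norm_eq_abs, abs_of_nonneg (Real.rpow_nonneg (norm_nonneg _) p)]
    exact Real.rpow_le_rpow_of_nonpos hδ this hp₂.le
  · exact integrableOn_const measure_ball_lt_top.ne
  · rw [ae_restrict_iff' measurableSet_ball]
    filter_upwards with x hx
    have hne : ‖x + D₀ • e‖ ≠ 0 := by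
      have := hlow D₀ (by rw [Set.mem_Ioi]; linarith) x hx
      exact (lt_of_lt_of_le hδ this).ne'
    have hc : Continuous (fun D : ℝ => ‖x + D • e‖) := by continuity
    exact (hc.continuousAt).rpow_const (Or.inl hne)

end Integrals

section SphereMeasure

lemma sphere_translate (N : ℕ) (c : EuclideanSpace ℝ (Fin N)) (ρ : ℝ) (d : ℝ) :
    μH[d] (sphere c ρ) = μH[d] (sphere (0 : EuclideanSpace ℝ (Fin N)) ρ) := by
  have h : sphere c ρ = c +ᵥ sphere (0 : EuclideanSpace ℝ (Fin N)) ρ := by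
    rw [vadd_sphere, vadd_eq_add, add_zero]
  rw [h, hausdorffMeasure_vadd _ (Or.inr (Equiv.addLeft c).surjective)]

lemma sphere_scale (m : ℕ) {ρ : ℝ} (hρ : 0 < ρ) :
    μH[(m:ℝ)] (sphere (0 : EuclideanSpace ℝ (Fin (m+1))) ρ)
      = (‖ρ‖₊ ^ (m:ℝ)) • μH[(m:ℝ)] (sphere (0 : EuclideanSpace ℝ (Fin (m+1))) 1) := by
  have h : sphere (0 : EuclideanSpace ℝ (Fin (m+1))) ρ
      = ρ • sphere (0 : EuclideanSpace ℝ (Fin (m+1))) 1 := by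
    rw [smul_sphere ρ (0 : EuclideanSpace ℝ (Fin (m+1))) zero_le_one, smul_zero,
      Real.norm_eq_abs, abs_of_pos hρ, mul_one]
  rw [h]
  exact MeasureTheory.Measure.hausdorffMeasure_smul₀ (by positivity) hρ.ne' _

lemma sphere_meas_toReal (m : ℕ) (c : EuclideanSpace ℝ (Fin (m+1))) {ρ : ℝ} (hρ : 0 < ρ) :
    (μH[(m:ℝ)] (sphere c ρ)).toReal
      = ρ ^ (m:ℕ) * (μH[(m:ℝ)] (sphere (0 : EuclideanSpace ℝ (Fin (m+1))) 1)).toReal := by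
  rw [sphere_translate, sphere_scale m hρ]
  rw [ENNReal.smul_def, smul_eq_mul, ENNReal.toReal_mul]
  congr 1
  rw [ENNReal.coe_toReal, NNReal.coe_rpow, coe_nnnorm, Real.norm_eq_abs, abs_of_pos hρ,
    Real.rpow_natCast]

lemma sphere_meas_ne_top (m : ℕ) (c : EuclideanSpace ℝ (Fin (m+1))) {ρ : ℝ} (hρ : 0 < ρ) :
    μH[(m:ℝ)] (sphere c ρ) ≠ ⊤ := by
  rw [sphere_translate, sphere_scale m hρ, ENNReal.smul_def, smul_eq_mul]
  exact ENNReal.mul_ne_top ENNReal.coe_ne_top (sphere_E_hausdorff_ne_top m)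

end SphereMeasure

section Key

lemma key_lemma (m : ℕ) (p : ℝ) (hp₂ : p < 0) (V ε : ℝ) (hV : 0 < V) (hε : 0 < ε)
    {e : EuclideanSpace ℝ (Fin (m+1))} (he : ‖e‖ = 1)
    (ρ t₀ : ℝ) (hρ : 0 < ρ) (ht : 0 < t₀)
    (hVol : V ≤ ∫ x in ball ((ρ + t₀) • e) ρ, ‖x‖ ^ p)
    (hSurf : t₀ ^ p * (μH[(m:ℝ)] (sphere (0 : EuclideanSpace ℝ (Fin (m+1))) ρ)).toReal < ε) :
    ∃ (c : EuclideanSpace ℝ (Fin (m+1))) (R : ℝ), 0 < R ∧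
      (0 : EuclideanSpace ℝ (Fin (m+1))) ∉ closedBall c R ∧
      (∫ x in ball c R, ‖x‖ ^ p) = V ∧
      (∫ x in sphere c R, ‖x‖ ^ p ∂(μH[(m : ℝ)])) < ε := by
  set G : ℝ → ℝ := fun D => ∫ x in ball (0 : EuclideanSpace ℝ (Fin (m+1))) ρ, ‖x + D • e‖ ^ p
    with hG
  have hGeq : ∀ D : ℝ, G D = ∫ x in ball (D • e) ρ, ‖x‖ ^ p := by
    intro D
    rw [hG, setIntegral_ball_translate (D • e) ρ (fun x => ‖x‖ ^ p)]
  have hnormD : ∀ D : ℝ, 0 < D → ‖D • e‖ = D := by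
    intro D hD
    rw [norm_smul, he, mul_one, Real.norm_eq_abs, abs_of_pos hD]
  set D₀ : ℝ := ρ + t₀ with hD₀
  have hD₀ρ : ρ < D₀ := by simp [hD₀]; linarith
  have hD₀pos : 0 < D₀ := by positivity
  set M : ℝ := (volume (ball (0 : EuclideanSpace ℝ (Fin (m+1))) ρ)).toReal with hM
  have hM0 : 0 ≤ M := ENNReal.toReal_nonneg
  have hMball : ∀ D : ℝ, (volume (ball (D • e) ρ)).toReal = M := by
    intro D
    rw [hM, Measure.addHaar_ball_center]
  -- upper endpoint
  set X : ℝ := (V / (M + 1)) ^ p⁻¹ with hX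
  have hX0 : 0 < X := Real.rpow_pos_of_pos (by positivity) _
  have hXp : X ^ p = V / (M + 1) := Real.rpow_inv_rpow (by positivity) hp₂.ne
  set D₁ : ℝ := max D₀ (ρ + X) + 1 with hD₁
  have hD₀₁ : D₀ ≤ D₁ := le_trans (le_max_left _ _) (by linarith [le_refl (max D₀ (ρ + X))])
  have hD₁ρ : ρ < D₁ := lt_of_lt_of_le hD₀ρ hD₀₁
  have hD₁pos : 0 < D₁ := lt_trans hρ hD₁ρ
  have hD₁X : X < D₁ - ρ := by
    have : ρ + X ≤ max D₀ (ρ + X) := le_max_right _ _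
    simp only [hD₁]
    linarith
  have hGD₁ : G D₁ < V := by
    rw [hGeq]
    have hup := setIntegral_rpow_ball_upper (N := m+1) (p := p) hp₂.le (D₁ • e) hρ
      (by rw [hnormD D₁ hD₁pos]; exact hD₁ρ)
    rw [hnormD D₁ hD₁pos, hMball D₁] at hup
    refine lt_of_le_of_lt hup ?_
    have h1 : (D₁ - ρ) ^ p < X ^ p := Real.rpow_lt_rpow_of_neg hX0 hD₁X hp₂
    have h2 : (D₁ - ρ) ^ p * M ≤ X ^ p * M := mul_le_mul_of_nonneg_right h1.le hM0
    refine lt_of_le_of_lt h2 ?_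
    rw [hXp]
    rw [div_mul_eq_mul_div, div_lt_iff₀ (by positivity)]
    nlinarith
  have hGD₀ : V ≤ G D₀ := by rw [hGeq]; exact hVol
  have hcont : ContinuousOn G (Set.Icc D₀ D₁) := by
    intro D hD
    have hDρ : D ∈ Set.Ioi ρ := Set.mem_Ioi.mpr (lt_of_lt_of_le hD₀ρ hD.1)
    exact (continuousOn_G hp₂ he hρ D hDρ).continuousWithinAt
  have hmem : V ∈ Set.Icc (G D₁) (G D₀) := ⟨hGD₁.le, hGD₀⟩
  obtain ⟨D, hDmem, hDeq⟩ := intermediate_value_Icc' hD₀₁ hcont hmem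
  have hDρ : ρ < D := lt_of_lt_of_le hD₀ρ hDmem.1
  have hDpos : 0 < D := lt_trans hρ hDρ
  refine ⟨D • e, ρ, hρ, ?_, ?_, ?_⟩
  · intro hmem0
    have := mem_closedBall.mp hmem0
    rw [dist_comm, dist_zero_right, hnormD D hDpos] at this
    linarith
  · rw [← hGeq]; exact hDeq
  · -- surface estimate
    have hfin : μH[(m:ℝ)] (sphere (D • e) ρ) ≠ ⊤ := sphere_meas_ne_top m _ hρ
    have hbound : ∀ x ∈ sphere (D • e) ρ, ‖‖x‖ ^ p‖ ≤ t₀ ^ p := by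
      intro x hx
      have hxd : dist x (D • e) = ρ := mem_sphere.mp hx
      have h1 : ‖D • e‖ - ‖x‖ ≤ ‖(D • e) - x‖ := norm_sub_norm_le _ _
      rw [← dist_eq_norm, dist_comm, hxd, hnormD D hDpos] at h1
      have hxt : t₀ ≤ ‖x‖ := by
        have : D₀ ≤ D := hDmem.1
        simp only [hD₀] at this
        linarith
      rw [Real.norm_eq_abs, abs_of_nonneg (Real.rpow_nonneg (norm_nonneg _) p)]
      exact Real.rpow_le_rpow_of_nonpos ht hxt hp₂.le
    have hint := norm_setIntegral_le_of_norm_le_const (μ := μH[(m:ℝ)])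
      (lt_top_iff_ne_top.mpr hfin) hbound
    have h2 : (∫ x in sphere (D • e) ρ, ‖x‖ ^ p ∂(μH[(m:ℝ)]))
        ≤ t₀ ^ p * (μH[(m:ℝ)] (sphere (D • e) ρ)).toReal :=
      le_trans (le_abs_self _) hint
    refine lt_of_le_of_lt h2 ?_
    rw [sphere_translate]
    exact hSurf

end Key

section Cases

lemma volball_toReal (m : ℕ) (c : EuclideanSpace ℝ (Fin (m+1))) {ρ : ℝ} (hρ : 0 < ρ) :
    (volume (ball c ρ)).toReal
      = ρ ^ (m+1) * (volume (ball (0 : EuclideanSpace ℝ (Fin (m+1))) 1)).toReal := by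
  rw [Measure.addHaar_ball_center, Measure.addHaar_ball _ _ hρ.le, ENNReal.toReal_mul,
    ENNReal.toReal_ofReal (by positivity), finrank_euclideanSpace_fin]

lemma caseA (m : ℕ) (p : ℝ) (hp₂ : p < 0) (hnp : 0 < ((m+1:ℕ):ℝ) + p)
    (V ε : ℝ) (hV : 0 < V) (hε : 0 < ε)
    {e : EuclideanSpace ℝ (Fin (m+1))} (he : ‖e‖ = 1) :
    ∃ (c : EuclideanSpace ℝ (Fin (m+1))) (R : ℝ), 0 < R ∧
      (0 : EuclideanSpace ℝ (Fin (m+1))) ∉ closedBall c R ∧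
      (∫ x in ball c R, ‖x‖ ^ p) = V ∧
      (∫ x in sphere c R, ‖x‖ ^ p ∂(μH[(m : ℝ)])) < ε := by
  set ω : ℝ := (volume (ball (0 : EuclideanSpace ℝ (Fin (m+1))) 1)).toReal with hωdef
  have hω : 0 < ω := ENNReal.toReal_pos (measure_ball_pos _ _ one_pos).ne' measure_ball_lt_top.ne
  set a : ℝ := (μH[(m:ℝ)] (sphere (0 : EuclideanSpace ℝ (Fin (m+1))) 1)).toReal with hadef
  have ha : 0 ≤ a := ENNReal.toReal_nonneg
  have h3p : (0:ℝ) < 3 ^ p := Real.rpow_pos_of_pos (by norm_num) p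
  set s : ℝ := ((m+1:ℕ):ℝ) + p with hsdef
  set ρ : ℝ := 1 + max ((V/(ω*3^p)) ^ s⁻¹) (a*V*(3^p)⁻¹/(ω*ε)) with hρdef
  have hmax0 : 0 ≤ max ((V/(ω*3^p)) ^ s⁻¹) (a*V*(3^p)⁻¹/(ω*ε)) :=
    le_trans (Real.rpow_nonneg (by positivity) _) (le_max_left _ _)
  have hρ1 : 1 ≤ ρ := by rw [hρdef]; linarith
  have hρ : 0 < ρ := lt_of_lt_of_le one_pos hρ1
  have hρ_pow : V / (ω*3^p) ≤ ρ ^ s := by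
    have hB : (0:ℝ) < V/(ω*3^p) := by positivity
    have h1 : (V/(ω*3^p)) ^ s⁻¹ ≤ ρ := by
      have := le_max_left ((V/(ω*3^p)) ^ s⁻¹) (a*V*(3^p)⁻¹/(ω*ε))
      rw [hρdef]; linarith
    calc V/(ω*3^p) = ((V/(ω*3^p)) ^ s⁻¹) ^ s := (Real.rpow_inv_rpow hB.le hnp.ne').symm
      _ ≤ ρ ^ s := Real.rpow_le_rpow (Real.rpow_nonneg hB.le _) h1 hnp.le
  have hsplit : ρ ^ s = ρ ^ (m+1) * ρ ^ p := by
    rw [hsdef, Real.rpow_add hρ, Real.rpow_natCast]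
  set t₀ : ℝ := (V/(ω*3^p*ρ^(m+1))) ^ p⁻¹ with ht₀def
  have hbase : (0:ℝ) < V/(ω*3^p*ρ^(m+1)) := by positivity
  have ht₀ : 0 < t₀ := Real.rpow_pos_of_pos hbase _
  have ht₀p : t₀ ^ p = V/(ω*3^p*ρ^(m+1)) := Real.rpow_inv_rpow hbase.le hp₂.ne
  have hρt : ρ ≤ t₀ := by
    have hcmp : t₀ ^ p ≤ ρ ^ p := by
      rw [ht₀p, div_le_iff₀ (by positivity)]
      have h2 : V ≤ ρ ^ s * (ω*3^p) := by
        rw [div_le_iff₀ (by positivity)] at hρ_pow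
        linarith
      rw [hsplit] at h2
      nlinarith
    by_contra h
    push_neg at h
    have := Real.rpow_lt_rpow_of_neg ht₀ h hp₂
    linarith
  refine key_lemma m p hp₂ V ε hV hε he ρ t₀ hρ ht₀ ?_ ?_
  · -- volume lower bound
    set c : EuclideanSpace ℝ (Fin (m+1)) := (ρ + t₀) • e with hcdef
    have hc : ‖c‖ = ρ + t₀ := by
      rw [hcdef, norm_smul, he, mul_one, Real.norm_eq_abs, abs_of_pos (by positivity)]
    have hlow := setIntegral_rpow_ball_lower (N := m+1) (p := p) hp₂.le c hρ
      (by rw [hc]; linarith)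
    rw [hc, volball_toReal m c hρ, ← hωdef] at hlow
    have h3t : (3*t₀) ^ p ≤ (ρ + t₀ + ρ) ^ p :=
      Real.rpow_le_rpow_of_nonpos (by positivity) (by linarith) hp₂.le
    have hmul : (3*t₀) ^ p = 3 ^ p * t₀ ^ p := Real.mul_rpow (by norm_num) ht₀.le
    have hVeq : V = 3 ^ p * t₀ ^ p * (ρ ^ (m+1) * ω) := by
      rw [ht₀p]
      field_simp
    calc V = 3 ^ p * t₀ ^ p * (ρ ^ (m+1) * ω) := hVeq
      _ = (3*t₀) ^ p * (ρ ^ (m+1) * ω) := by rw [hmul]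
      _ ≤ (ρ + t₀ + ρ) ^ p * (ρ ^ (m+1) * ω) := by
          apply mul_le_mul_of_nonneg_right h3t (by positivity)
      _ ≤ ∫ x in ball c ρ, ‖x‖ ^ p := hlow
  · -- surface bound
    rw [sphere_meas_toReal m _ hρ, ← hadef, ht₀p]
    have hρbig : a*V*(3^p)⁻¹/(ω*ε) < ρ := by
      have := le_max_right ((V/(ω*3^p)) ^ s⁻¹) (a*V*(3^p)⁻¹/(ω*ε))
      rw [hρdef]; linarith
    have hkey : a*V*(3^p)⁻¹ < ρ*(ω*ε) := by
      rw [div_lt_iff₀ (by positivity)] at hρbig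
      linarith
    have heq : V/(ω*3^p*ρ^(m+1)) * (ρ ^ (m:ℕ) * a) = V*a/(ω*3^p*ρ) := by
      rw [pow_succ]
      field_simp
    rw [heq, div_lt_iff₀ (by positivity)]
    have h3 : a*V < ρ*ω*ε*3^p := by
      have h4 : (a*V*(3^p)⁻¹)*(3^p) < (ρ*(ω*ε))*(3^p) :=
        mul_lt_mul_of_pos_right hkey h3p
      rw [inv_mul_cancel_right₀ h3p.ne'] at h4
      linarith
    nlinarith

lemma caseB (m : ℕ) (p : ℝ) (hp : p = -((m+1:ℕ):ℝ))
    (V ε : ℝ) (hV : 0 < V) (hε : 0 < ε)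
    {e : EuclideanSpace ℝ (Fin (m+1))} (he : ‖e‖ = 1) :
    ∃ (c : EuclideanSpace ℝ (Fin (m+1))) (R : ℝ), 0 < R ∧
      (0 : EuclideanSpace ℝ (Fin (m+1))) ∉ closedBall c R ∧
      (∫ x in ball c R, ‖x‖ ^ p) = V ∧
      (∫ x in sphere c R, ‖x‖ ^ p ∂(μH[(m : ℝ)])) < ε := by
  have hp₂ : p < 0 := by rw [hp]; push_cast; linarith
  set ω : ℝ := (volume (ball (0 : EuclideanSpace ℝ (Fin (m+1))) 1)).toReal with hωdef
  have hω : 0 < ω := ENNReal.toReal_pos (measure_ball_pos _ _ one_pos).ne' measure_ball_lt_top.ne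
  set a : ℝ := (μH[(m:ℝ)] (sphere (0 : EuclideanSpace ℝ (Fin (m+1))) 1)).toReal with hadef
  have ha : 0 ≤ a := ENNReal.toReal_nonneg
  set K : ℕ := ⌈V * 4^(m+1) / ω⌉₊ + 1 with hKdef
  have hKV : V ≤ (K:ℝ) * (ω / 4^(m+1)) := by
    have h1 : V * 4^(m+1) / ω ≤ (K:ℝ) := by
      calc V * 4^(m+1) / ω ≤ (⌈V * 4^(m+1) / ω⌉₊ : ℝ) := Nat.le_ceil _
        _ ≤ (K:ℝ) := by rw [hKdef]; push_cast; linarith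
    rw [div_le_iff₀ hω] at h1
    have h2 : (K:ℝ) * (ω / 4^(m+1)) = ((K:ℝ) * ω) / 4^(m+1) := by ring
    rw [h2, le_div_iff₀ (by positivity : (0:ℝ) < 4^(m+1))]
    linarith
  set R' : ℝ := 2^(K+2) with hR'def
  have hR' : (0:ℝ) < R' := by positivity
  set l : ℝ := max 1 (a*R'^m/ε) + 1 with hldef
  have hl1 : 1 < l := by
    have := le_max_left (1:ℝ) (a*R'^m/ε)
    rw [hldef]; linarith
  have hl0 : (0:ℝ) < l := by linarith
  have hlε : a*R'^m/ε < l := by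
    have := le_max_right (1:ℝ) (a*R'^m/ε)
    rw [hldef]; linarith
  set ρ : ℝ := l * R' with hρdef
  have hρ : 0 < ρ := by positivity
  refine key_lemma m p hp₂ V ε hV hε he ρ l hρ hl0 ?_ ?_
  · -- volume lower bound via disjoint sub-balls
    set c : EuclideanSpace ℝ (Fin (m+1)) := (ρ + l) • e with hcdef
    have hc : ‖c‖ = ρ + l := by
      rw [hcdef, norm_smul, he, mul_one, Real.norm_eq_abs, abs_of_pos (by positivity)]
    have hdist : ∀ x y : ℝ, dist (x • e) (y • e) = |x - y| := by
      intro x y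
      rw [dist_eq_norm, ← sub_smul, norm_smul, he, mul_one, Real.norm_eq_abs]
    set b : ℕ → Set (EuclideanSpace ℝ (Fin (m+1))) :=
      fun k => ball ((3*2^k*l) • e) (2^k*l) with hbdef
    have hsub : ∀ k ∈ Finset.range K, b k ⊆ ball c ρ := by
      intro k hk
      rw [Finset.mem_range] at hk
      apply ball_subset_ball'
      rw [hcdef, hdist]
      have hklt : (3:ℝ)*2^k < R' := by
        have ha1 : (3:ℝ)*2^k < 4*2^k :=
          mul_lt_mul_of_pos_right (by norm_num) (by positivity)
        have ha2 : (4:ℝ)*2^k = 2^(k+2) := by ring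
        have ha3 : (2:ℝ)^(k+2) ≤ 2^(K+2) := pow_le_pow_right₀ (by norm_num) (by omega)
        rw [hR'def]; linarith
      have h3l : 3*2^k*l < l*R' :=
        (mul_lt_mul_of_pos_right hklt hl0).trans_eq (mul_comm R' l)
      have habs : |3*2^k*l - (ρ + l)| = ρ + l - 3*2^k*l := by
        rw [abs_of_nonpos (by rw [hρdef]; linarith), neg_sub]
      rw [habs, hρdef]
      have h2k : (1:ℝ) ≤ 2^k := one_le_pow₀ (by norm_num)
      have hA : (1:ℝ)*l ≤ 2^k*l := mul_le_mul_of_nonneg_right h2k hl0.le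
      have hB : 3*2^k*l = 3*(2^k*l) := by ring
      linarith
    have hdisj : Set.Pairwise (↑(Finset.range K) : Set ℕ) (Function.onFun Disjoint b) := by
      have hlt : ∀ j k : ℕ, j < k → Disjoint (b j) (b k) := by
        intro j k hjk
        apply ball_disjoint_ball
        rw [hdist]
        have h1 : (2:ℝ)^(j+2) ≤ 2^(k+1) := pow_le_pow_right₀ (by norm_num) (by omega)
        have h2 : (2:ℝ)^j ≤ 2^k := pow_le_pow_right₀ (by norm_num) (by omega)
        have hjl : 2^j*l ≤ 2^k*l := mul_le_mul_of_nonneg_right h2 hl0.le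
        have e3 : 3*2^j*l = 3*(2^j*l) := by ring
        have e4 : 3*2^k*l = 3*(2^k*l) := by ring
        have habs : |3*2^j*l - 3*2^k*l| = 3*(2^k*l) - 3*(2^j*l) := by
          rw [abs_of_nonpos (by linarith), neg_sub, e3, e4]
        rw [habs]
        have h4 : (4*(2:ℝ)^j)*l ≤ (2*2^k)*l := by
          apply mul_le_mul_of_nonneg_right _ hl0.le
          calc (4:ℝ)*2^j = 2^(j+2) := by ring
            _ ≤ 2^(k+1) := h1
            _ = 2*2^k := by ring
        have e5 : (4*(2:ℝ)^j)*l = 4*(2^j*l) := by ring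
        have e6 : (2*(2:ℝ)^k)*l = 2*(2^k*l) := by ring
        linarith
      intro j hj k hk hjk
      rcases lt_or_gt_of_ne hjk with h | h
      · exact hlt j k h
      · exact (hlt k j h).symm
    have hintB : IntegrableOn (fun x : EuclideanSpace ℝ (Fin (m+1)) => ‖x‖ ^ p) (ball c ρ) := by
      apply integrableOn_rpow_ball
      rw [hc]; linarith
    have hmono := setIntegral_mono_set hintB
      (Filter.Eventually.of_forall (fun x => Real.rpow_nonneg (norm_nonneg _) p))
      (HasSubset.Subset.eventuallyLE (Set.iUnion₂_subset hsub))
    have hsum := integral_biUnion_finset (μ := volume) (f := fun x => ‖x‖ ^ p) (Finset.range K)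
      (fun k _ => measurableSet_ball) hdisj
      (fun k hk => hintB.mono_set (hsub k hk))
    have hterm : ∀ k ∈ Finset.range K,
        ω / 4^(m+1) ≤ ∫ x in b k, ‖x‖ ^ p := by
      intro k hk
      have h2k : (0:ℝ) < 2^k := by positivity
      have hck : ‖(3*2^k*l) • e‖ = 3*2^k*l := by
        rw [norm_smul, he, mul_one, Real.norm_eq_abs, abs_of_pos (by positivity)]
      have hrk : (0:ℝ) < 2^k*l := by positivity
      have hlow := setIntegral_rpow_ball_lower (N := m+1) (p := p) hp₂.le ((3*2^k*l) • e) hrk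
        (by rw [hck]
            have e7 : 3*2^k*l = 3*(2^k*l) := by ring
            have := mul_pos h2k hl0
            linarith)
      rw [hck, volball_toReal m _ hrk, ← hωdef] at hlow
      refine le_trans (le_of_eq ?_) hlow
      rw [hp]
      rw [show (3*2^k*l + 2^k*l) = 4*(2^k*l) by ring]
      rw [Real.rpow_neg (by positivity), Real.rpow_natCast]
      rw [mul_pow]
      field_simp
    calc V ≤ (K:ℝ) * (ω / 4^(m+1)) := hKV
      _ = ∑ _k ∈ Finset.range K, ω / 4^(m+1) := by
          rw [Finset.sum_const, Finset.card_range, nsmul_eq_mul]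
      _ ≤ ∑ k ∈ Finset.range K, ∫ x in b k, ‖x‖ ^ p := Finset.sum_le_sum hterm
      _ = ∫ x in ⋃ k ∈ Finset.range K, b k, ‖x‖ ^ p := hsum.symm
      _ ≤ ∫ x in ball c ρ, ‖x‖ ^ p := hmono
  · -- surface bound
    rw [sphere_meas_toReal m _ hρ, ← hadef, hp]
    rw [Real.rpow_neg hl0.le, Real.rpow_natCast]
    have heq : (l^(m+1))⁻¹ * (ρ ^ (m:ℕ) * a) = a * R'^m / l := by
      rw [hρdef, mul_pow, pow_succ]
      field_simp
    rw [heq, div_lt_iff₀ hl0]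
    rw [div_lt_iff₀ hε] at hlε
    linarith

end Cases

theorem nonexistence_Rn (n : ℕ) (hn : 2 ≤ n) (p : ℝ) (hp₁ : -(n : ℝ) ≤ p) (hp₂ : p < 0)
    (V ε : ℝ) (hV : 0 < V) (hε : 0 < ε) :
    ∃ (c : EuclideanSpace ℝ (Fin n)) (R : ℝ), 0 < R ∧
      (0 : EuclideanSpace ℝ (Fin n)) ∉ closedBall c R ∧
      (∫ x in ball c R, ‖x‖ ^ p) = V ∧
      (∫ x in sphere c R, ‖x‖ ^ p ∂(μH[(n : ℝ) - 1])) < ε := by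
  obtain ⟨m, rfl⟩ : ∃ m, n = m + 1 := ⟨n - 1, by omega⟩
  have hd : ((m+1 : ℕ) : ℝ) - 1 = (m : ℝ) := by push_cast; ring
  rw [hd]
  have he : ‖(EuclideanSpace.single (0 : Fin (m+1)) (1:ℝ) : EuclideanSpace ℝ (Fin (m+1)))‖ = 1 := by
    rw [EuclideanSpace.norm_single]; norm_num
  rcases eq_or_lt_of_le hp₁ with heq | hlt
  · exact caseB m p heq.symm V ε hV hε he
  · exact caseA m p hp₂ (by linarith) V ε hV hε he
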